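/- Under the same hypotheses, if Π : {1} ∪ A ⇉ {2} ∪ A is a system of treks in D without sided intersection and τ_1 is the trek of Π with source 1, then the left-hand side of τ_1 is not equal to {1}, the top node of τ_1 is not 1, there is a proper directed path from top(τ_1) to 1, and top(τ_1) ∈ Tops_A(1,2). -/

import Mathlib

open Matrix BigOperators

def SupportedOn {V : Type} (E : V → V → Prop) (Λ : Matrix V V ℝ) : Prop :=
  ∀ u v, ¬ E u v → Λ u v = 0

def Acyclic {V : Type} (E : V → V → Prop) : Prop :=
  ∀ v, ¬ Relation.TransGen E v v

def cycAdj (p : ℕ) (i j : Fin p) : Prop :=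
  (i.1 + 1) % p = j.1 ∨ (j.1 + 1) % p = i.1

structure Trek {V : Type} (E : V → V → Prop) (u v : V) where
  left : List V
  right : List V
  left_ne : left ≠ []
  right_ne : right ≠ []
  top_eq : left.head left_ne = right.head right_ne
  chain_left : List.Chain' E left
  chain_right : List.Chain' E right
  last_left : left.getLast left_ne = u
  last_right : right.getLast right_ne = v

def Trek.top {V : Type} {E : V → V → Prop} {u v : V} (τ : Trek E u v) : V :=
  τ.left.head τ.left_ne

def edgeProd {V : Type} (Λ : Matrix V V ℝ) (l : List V) : ℝ :=
  ((l.zip l.tail).map fun p => Λ p.1 p.2).prod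

def Trek.mono {V : Type} {E : V → V → Prop} {u v : V} (Λ Ω : Matrix V V ℝ)
    (τ : Trek E u v) : ℝ :=
  Ω τ.top τ.top * edgeProd Λ τ.left * edgeProd Λ τ.right

structure TrekSystem {V : Type} (E : V → V → Prop) {n : ℕ} (x y : Fin n → V) where
  perm : Equiv.Perm (Fin n)
  trek : ∀ i, Trek E (x i) (y (perm i))

def TrekSystem.NoSided {V : Type} {E : V → V → Prop} {n : ℕ} {x y : Fin n → V}
    (S : TrekSystem E x y) : Prop :=
  ∀ i j, i ≠ j →
    (∀ a : V, ¬(a ∈ (S.trek i).left ∧ a ∈ (S.trek j).left)) ∧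
    (∀ a : V, ¬(a ∈ (S.trek i).right ∧ a ∈ (S.trek j).right))

structure DWalk {U : Type} (E : U → U → Prop) (u v : U) where
  steps : List (Bool × U × U)
  ne : steps ≠ []
  first_eq : (steps.head ne).2.1 = u
  last_eq : (steps.getLast ne).2.2 = v
  edge : ∀ s ∈ steps, (s.1 = true → E s.2.1 s.2.2) ∧ (s.1 = false → E s.2.2 s.2.1)
  chain : List.Chain' (fun s t : Bool × U × U => s.2.2 = t.2.1) steps

def stepPairOK {U : Type} (A : Set U) (s t : Bool × U × U) : Prop :=
  ((s.1 = true ∧ t.1 = false) → s.2.2 ∈ A) ∧ (¬(s.1 = true ∧ t.1 = false) → s.2.2 ∉ A)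

def DWalk.DConn {U : Type} {E : U → U → Prop} {u v : U} (A : Set U)
    (w : DWalk E u v) : Prop :=
  List.Chain' (stepPairOK A) w.steps

def topOf {U : Type} : List (Bool × U × U) → U → U
  | [], u => u
  | (d, a, _b) :: rest, _ => if d then a else topOf rest _b

def DWalk.top {U : Type} {E : U → U → Prop} {u v : U} (w : DWalk E u v) : U :=
  topOf w.steps u

def TopsA {U : Type} (E : U → U → Prop) (A : Set U) (u v : U) : Set U :=
  {t | ∃ w : DWalk E u v, w.DConn A ∧ w.top = t}

def anAvoid {U : Type} (E : U → U → Prop) (A : Set U) (x : U) : Set U :=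
  {u | u ∉ A ∧ Relation.ReflTransGen (fun a b => E a b ∧ a ∉ A ∧ b ∉ A) u x}

def EA {U : Type} (E : U → U → Prop) (A : Set U) (n1 n2 : U) : Set (U × U) :=
  {e | E e.1 e.2 ∧ e.1 ∈ TopsA E A n1 n2 ∧ e.2 ∈ anAvoid E A n1 ∧ e.2 ∉ TopsA E A n1 n2}

def IsProperPath {U : Type} (E : U → U → Prop) (A : Set U) (l : List U) : Prop :=
  l ≠ [] ∧ List.Chain' (fun a b => E a b ∧ a ∉ A) l

def DigraphCov {U : Type} [Fintype U] [DecidableEq U] (E : U → U → Prop) :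
    Set (Matrix U U ℝ) :=
  {S | ∃ Λ Ω : Matrix U U ℝ, SupportedOn E Λ ∧ Ω.IsDiag ∧ (∀ u, 0 < Ω u u) ∧
        S = ((1 - Λ)⁻¹)ᵀ * Ω * (1 - Λ)⁻¹}

def BSupported {V : Type} (B : SimpleGraph V) (Ω : Matrix V V ℝ) : Prop :=
  ∀ u v, u ≠ v → ¬ B.Adj u v → Ω u v = 0

def MixedCov {V : Type} [Fintype V] [DecidableEq V] (D : V → V → Prop)
    (B : SimpleGraph V) : Set (Matrix V V ℝ) :=
  {S | ∃ Λ Ω : Matrix V V ℝ, SupportedOn D Λ ∧ Ω.PosDef ∧ BSupported B Ω ∧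
        S = ((1 - Λ)⁻¹)ᵀ * Ω * (1 - Λ)⁻¹}

def StrictlyGaussianCausal {V : Type} [Fintype V] [DecidableEq V]
    (D : V → V → Prop) (B : SimpleGraph V) : Prop :=
  ∃ (U : Type) (iF : Fintype U) (iD : DecidableEq U) (ι : V ↪ U) (E : U → U → Prop),
    Acyclic E ∧
      (fun S : Matrix U U ℝ => S.submatrix ι ι) '' (@DigraphCov U iF iD E) = MixedCov D B

def Chordal {V : Type} (B : SimpleGraph V) : Prop :=
  ∀ n : ℕ, 4 ≤ n → ∀ f : ZMod n → V, Function.Injective f →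
    (∀ i, B.Adj (f i) (f (i + 1))) →
    ∃ i j : ZMod n, j ≠ i + 1 ∧ i ≠ j + 1 ∧ i ≠ j ∧ B.Adj (f i) (f j)

def ChainGraph {V : Type} (D : V → V → Prop) (B : SimpleGraph V) : Prop :=
  ¬ ∃ u v, D u v ∧ Relation.ReflTransGen (fun a b => D a b ∨ B.Adj a b) v u


namespace Aux13
variable {U : Type}

def flipS : Bool × U × U → Bool × U × U := fun s => (!s.1, s.2.2, s.2.1)

def fwd : List U → List (Bool × U × U)
  | a :: b :: t => (true, a, b) :: fwd (b :: t)
  | _ => []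

def bwd (l : List U) : List (Bool × U × U) := ((fwd l).map flipS).reverse

structure WalkOK (E : U → U → Prop) (A : Set U) (L : List (Bool × U × U)) (u v : U) : Prop where
  ne : L ≠ []
  first : (L.head ne).2.1 = u
  last : (L.getLast ne).2.2 = v
  edge : ∀ s ∈ L, (s.1 = true → E s.2.1 s.2.2) ∧ (s.1 = false → E s.2.2 s.2.1)
  chain : List.Chain' (fun s t : Bool × U × U => s.2.2 = t.2.1) L
  conn : List.Chain' (stepPairOK A) L

lemma spo_false_left {A : Set U} {s t : Bool × U × U} (h1 : s.1 = false)
    (h2 : s.2.2 ∉ A) : stepPairOK A s t :=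
  ⟨fun h => absurd (h1 ▸ h.1) (by simp), fun _ => h2⟩

lemma spo_collider {A : Set U} {s t : Bool × U × U} (h1 : s.1 = true) (h2 : t.1 = false)
    (h3 : s.2.2 ∈ A) : stepPairOK A s t :=
  ⟨fun _ => h3, fun h => absurd ⟨h1, h2⟩ h⟩

lemma spo_noncollider {A : Set U} {s t : Bool × U × U} (h1 : ¬(s.1 = true ∧ t.1 = false))
    (h2 : s.2.2 ∉ A) : stepPairOK A s t :=
  ⟨fun h => absurd h h1, fun _ => h2⟩

lemma chain'_conj {α : Type*} {R S : α → α → Prop} {l : List α} (hR : l.Chain' R)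
    (hS : l.Chain' S) : l.Chain' (fun a b => R a b ∧ S a b) := by
  simp only [List.Chain'] at *
  rw [List.isChain_iff_getElem] at *
  exact fun i h => ⟨hR i h, hS i h⟩

lemma WalkOK.append {E : U → U → Prop} {A : Set U} {L1 L2 : List (Bool × U × U)} {u m v : U}
    (W1 : WalkOK E A L1 u m) (W2 : WalkOK E A L2 m v)
    (hj : stepPairOK A (L1.getLast W1.ne) (L2.head W2.ne)) :
    WalkOK E A (L1 ++ L2) u v := by
  have h1 : ¬ (L1.isEmpty = true) := by simp [W1.ne]
  have h2 : ¬ (L2.isEmpty = true) := by simp [W2.ne]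
  have hne : L1 ++ L2 ≠ [] := by simp [W1.ne]
  have hjc : (L1.getLast W1.ne).2.2 = (L2.head W2.ne).2.1 := by
    rw [W1.last, W2.first]
  refine ⟨hne, ?_, ?_, ?_, ?_, ?_⟩
  · rw [List.head_append, dif_neg h1]; exact W1.first
  · rw [List.getLast_append, dif_neg h2]; exact W2.last
  · intro s hs
    rcases List.mem_append.1 hs with h | h
    exacts [W1.edge s h, W2.edge s h]
  · refine W1.chain.append W2.chain ?_
    intro a ha b hb
    rw [List.getLast?_eq_getLast W1.ne] at ha
    rw [List.head?_eq_head W2.ne] at hb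
    rw [← Option.some_inj.1 ha, ← Option.some_inj.1 hb]; exact hjc
  · refine W1.conn.append W2.conn ?_
    intro a ha b hb
    rw [List.getLast?_eq_getLast W1.ne] at ha
    rw [List.head?_eq_head W2.ne] at hb
    rw [← Option.some_inj.1 ha, ← Option.some_inj.1 hb]; exact hj

lemma WalkOK.reverse {E : U → U → Prop} {A : Set U} {L : List (Bool × U × U)} {u v : U}
    (W : WalkOK E A L u v) : WalkOK E A ((L.map flipS).reverse) v u := by
  have hm : L.map flipS ≠ [] := by simp [W.ne]
  have hne : (L.map flipS).reverse ≠ [] := by simp [W.ne]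
  have hcc : L.Chain' (fun s t => (s.2.2 = t.2.1) ∧ stepPairOK A s t) :=
    chain'_conj W.chain W.conn
  refine ⟨hne, ?_, ?_, ?_, ?_, ?_⟩
  · rw [List.head_reverse, List.getLast_map]
    show (flipS _).2.1 = v
    simp only [flipS]; exact W.last
  · rw [List.getLast_reverse, List.head_map]
    show (flipS _).2.2 = u
    simp only [flipS]; exact W.first
  · intro s hs
    rw [List.mem_reverse, List.mem_map] at hs
    obtain ⟨t, ht, rfl⟩ := hs
    obtain ⟨e1, e2⟩ := W.edge t ht
    constructor
    · intro h; simp only [flipS, Bool.not_eq_true'] at h ⊢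
      exact e2 h
    · intro h; simp only [flipS, Bool.not_eq_false'] at h ⊢
      exact e1 h
  · rw [List.Chain', List.isChain_reverse, List.isChain_map]
    refine W.chain.imp ?_
    intro a b h
    exact h.symm
  · rw [List.Chain', List.isChain_reverse, List.isChain_map]
    refine hcc.imp ?_
    rintro a b ⟨hab, h1, h2⟩
    show stepPairOK A (flipS b) (flipS a)
    constructor
    · intro hh
      simp only [flipS, Bool.not_eq_true', Bool.not_eq_false'] at hh
      have : ¬ (a.1 = true ∧ b.1 = false) → a.2.2 ∈ A := by
        intro _; exact h1 ⟨hh.2, hh.1⟩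
      simp only [flipS]
      rw [← hab]; exact h1 ⟨hh.2, hh.1⟩
    · intro hh
      simp only [flipS, Bool.not_eq_true', Bool.not_eq_false'] at hh
      simp only [flipS]
      rw [← hab]
      exact h2 (fun hc => hh ⟨hc.2, hc.1⟩)


lemma fwd_all_true : ∀ (l : List U), ∀ s ∈ fwd l, s.1 = true
  | a :: b :: t, s, hs => by
    rcases List.mem_cons.1 hs with h | h
    · subst h; rfl
    · exact fwd_all_true (b :: t) s h
  | [], s, hs => by simp [fwd] at hs
  | [a], s, hs => by simp [fwd] at hs

lemma bwd_all_false (l : List U) : ∀ s ∈ bwd l, s.1 = false := by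
  intro s hs
  rw [bwd, List.mem_reverse, List.mem_map] at hs
  obtain ⟨t, ht, rfl⟩ := hs
  simp [flipS, fwd_all_true l t ht]

lemma fwdOK {E : U → U → Prop} {A : Set U} :
    ∀ (t : List U) (a b : U), List.Chain' E (a :: b :: t) →
      (∀ x ∈ (a :: b :: t).dropLast, x ∉ A) →
      WalkOK E A (fwd (a :: b :: t)) a ((a :: b :: t).getLast (by simp))
  | [], a, b, hc, hA => by
    rw [List.Chain', List.isChain_cons_cons] at hc
    refine ⟨by simp [fwd], rfl, by simp [fwd], ?_, by simp [fwd, List.Chain'], by simp [fwd, List.Chain']⟩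
    intro s hs
    simp only [fwd, List.mem_singleton] at hs
    subst hs
    exact ⟨fun _ => hc.1, by simp⟩
  | c :: t', a, b, hc, hA => by
    rw [List.Chain', List.isChain_cons_cons] at hc
    have hA' : ∀ x ∈ (b :: c :: t').dropLast, x ∉ A := by
      intro x hx; exact hA x (by simpa using Or.inr hx)
    have IH := fwdOK t' b c hc.2 hA'
    have hb : b ∉ A := hA b (by simp)
    have hne : fwd (a :: b :: c :: t') ≠ [] := by simp [fwd]
    refine ⟨hne, rfl, ?_, ?_, ?_, ?_⟩
    · show ((fwd (a :: b :: c :: t')).getLast hne).2.2 = _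
      have e1 : (fwd (a :: b :: c :: t')).getLast hne = (fwd (b :: c :: t')).getLast IH.ne :=
        List.getLast_cons IH.ne
      have e2 : (a :: b :: c :: t').getLast (by simp) = (b :: c :: t').getLast (by simp) :=
        List.getLast_cons (by simp)
      rw [e1, e2]; exact IH.last
    · intro s hs
      rcases List.mem_cons.1 hs with h | h
      · subst h; exact ⟨fun _ => hc.1, by simp⟩
      · exact IH.edge s h
    · rw [show fwd (a :: b :: c :: t') = (true, a, b) :: fwd (b :: c :: t') from rfl,
        List.Chain', List.isChain_cons]
      refine ⟨?_, IH.chain⟩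
      intro y hy
      rw [List.head?_eq_head IH.ne] at hy
      rw [← Option.some_inj.1 hy]
      rfl
    · rw [show fwd (a :: b :: c :: t') = (true, a, b) :: fwd (b :: c :: t') from rfl,
        List.Chain', List.isChain_cons]
      refine ⟨?_, IH.conn⟩
      intro y hy
      rw [List.head?_eq_head IH.ne] at hy
      rw [← Option.some_inj.1 hy]
      have : ((fwd (b :: c :: t')).head IH.ne).1 = true :=
        fwd_all_true _ _ (List.head_mem IH.ne)
      exact spo_noncollider (fun hh => by rw [this] at hh; exact absurd hh.2 (by simp)) hb

lemma bwdOK {E : U → U → Prop} {A : Set U} (t : List U) (a b : U)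
    (hc : List.Chain' E (a :: b :: t))
    (hA : ∀ x ∈ (a :: b :: t).dropLast, x ∉ A) :
    WalkOK E A (bwd (a :: b :: t)) ((a :: b :: t).getLast (by simp)) a :=
  (fwdOK t a b hc hA).reverse

lemma bwd_cons₂ (a b : U) (t : List U) :
    bwd (a :: b :: t) = bwd (b :: t) ++ [(false, b, a)] := by
  rw [bwd, show fwd (a :: b :: t) = (true, a, b) :: fwd (b :: t) from rfl]
  simp [flipS, bwd]

lemma topOf_bwd_append {u : U} :
    ∀ (t : List U) (a b : U) (rest : List (Bool × U × U)),
      topOf (bwd (a :: b :: t) ++ rest) u = topOf rest a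
  | [], a, b, rest => by
    show topOf (bwd [a, b] ++ rest) u = topOf rest a
    have e : bwd [a, b] = [(false, b, a)] := rfl
    rw [e]
    simp [topOf]
  | c :: t', a, b, rest => by
    rw [bwd_cons₂, List.append_assoc, List.singleton_append]
    rw [topOf_bwd_append t' b c ((false, b, a) :: rest)]
    simp [topOf]

lemma topOf_true_cons {u a b : U} {r : List (Bool × U × U)} :
    topOf ((true, a, b) :: r) u = a := by simp [topOf]

lemma chain'_transGen {E : U → U → Prop} :
    ∀ {l : List U} {a b : U}, List.Chain' E (a :: l) → b ∈ l → Relation.TransGen E a b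
  | c :: t, a, b, hc, hb => by
    rw [List.Chain', List.isChain_cons_cons] at hc
    rcases List.mem_cons.1 hb with h | h
    · subst h; exact Relation.TransGen.single hc.1
    · exact Relation.TransGen.head hc.1 (chain'_transGen hc.2 h)

lemma chain'_nodup {E : U → U → Prop} (hE : Acyclic E) :
    ∀ {l : List U}, List.Chain' E l → l.Nodup
  | [], _ => List.nodup_nil
  | a :: t, hc => by
    refine List.nodup_cons.2 ⟨?_, chain'_nodup hE hc.tail⟩
    intro ha
    exact hE a (chain'_transGen hc ha)

lemma chain'_rtg {r : U → U → Prop} :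
    ∀ {l : List U} (h : l ≠ []), List.Chain' r l →
      Relation.ReflTransGen r (l.head h) (l.getLast h)
  | [a], _, _ => Relation.ReflTransGen.refl
  | a :: b :: t, _, hc => by
    rw [List.Chain', List.isChain_cons_cons] at hc
    have := chain'_rtg (l := b :: t) (by simp) hc.2
    have e : (a :: b :: t).getLast (by simp) = (b :: t).getLast (by simp) :=
      List.getLast_cons (by simp)
    rw [e]
    exact Relation.ReflTransGen.head hc.1 this

lemma nodup_head_getLast {l : List U} (h : l ≠ []) (hd : l.Nodup)
    (he : l.head h = l.getLast h) : l = [l.head h] := by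
  match l, h with
  | [a], _ => rfl
  | a :: b :: t, _ =>
    exfalso
    have e : (a :: b :: t).getLast (by simp) = (b :: t).getLast (by simp) :=
      List.getLast_cons (by simp)
    rw [e] at he
    have : (b :: t).getLast (by simp) ∈ b :: t := List.getLast_mem _
    rw [← he] at this
    simp only [List.head_cons] at this
    exact (List.nodup_cons.1 hd).1 this

lemma chain'_restrict {E : U → U → Prop} {A : Set U} {l : List U}
    (hc : List.Chain' E l) (hA : ∀ a ∈ l, a ∉ A) :
    List.Chain' (fun a b => E a b ∧ a ∉ A) l := by
  simp only [List.Chain'] at *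
  rw [List.isChain_iff_getElem] at *
  intro i h
  exact ⟨hc i h, hA _ (by apply List.getElem_mem)⟩

lemma WalkOK.toDWalk {E : U → U → Prop} {A : Set U} {L : List (Bool × U × U)} {u v : U}
    (W : WalkOK E A L u v) : ∃ w : DWalk E u v, w.DConn A ∧ w.steps = L :=
  ⟨⟨L, W.ne, W.first, W.last, W.edge, W.chain⟩, W.conn, rfl⟩

lemma walkOK_of_dwalk {E : U → U → Prop} {A : Set U} {u v : U} (w : DWalk E u v)
    (h : w.DConn A) : WalkOK E A w.steps u v :=
  ⟨w.ne, w.first_eq, w.last_eq, w.edge, w.chain, h⟩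

lemma fwd_ne {a b : U} {t : List U} : fwd (a :: b :: t) ≠ [] := by simp [fwd]

lemma bwd_ne {a b : U} {t : List U} : bwd (a :: b :: t) ≠ [] := by simp [bwd, fwd]

lemma head_append_left {α : Type*} {l1 l2 : List α} (h : l1 ≠ []) (h2 : l1 ++ l2 ≠ []) :
    (l1 ++ l2).head h2 = l1.head h := by
  rw [List.head_append, dif_neg (by simp [h])]

lemma getLast_append_right {α : Type*} {l1 l2 : List α} (h : l2 ≠ []) (h2 : l1 ++ l2 ≠ []) :
    (l1 ++ l2).getLast h2 = l2.getLast h := by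
  rw [List.getLast_append, dif_neg (by simp [h])]

lemma getLast_not_mem_dropLast {α : Type*} {l : List α} (h : l ≠ []) (hd : l.Nodup) :
    l.getLast h ∉ l.dropLast := by
  intro hmem
  have e := List.dropLast_append_getLast h
  rw [← e] at hd
  rcases List.nodup_append.1 hd with ⟨_, _, hdisj⟩
  exact hdisj _ hmem _ (by simp) rfl

lemma WalkOK.cast {E : U → U → Prop} {A : Set U} {L : List (Bool × U × U)} {u v u' v' : U}
    (W : WalkOK E A L u v) (h1 : u = u') (h2 : v = v') : WalkOK E A L u' v' := by
  subst h1; subst h2; exact W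

lemma mem_of_getLast_eq {α : Type*} {l : List α} {h : l ≠ []} {a : α}
    (e : l.getLast h = a) : a ∈ l := e ▸ List.getLast_mem h

lemma mem_cast {α : Type*} {l : List α} {a b : α} (h : a ∈ l) (e : a = b) : b ∈ l := e ▸ h

lemma eq_of_mem_singleton' {α : Type*} {a b : α} (h : a ∈ [b]) : a = b := by
  simpa using h

lemma head_append_nil_left {α : Type*} {l1 l2 : List α} (h1 : l1 = [])
    (hne : l1 ++ l2 ≠ []) (hne2 : l2 ≠ []) : (l1 ++ l2).head hne = l2.head hne2 := by
  subst h1; rfl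

lemma head_eq_of_eq {α : Type*} {l : List α} {h : l ≠ []} {a : α} {t : List α}
    (e : l = a :: t) : l.head h = a := by subst e; rfl

lemma list_shape {α : Type*} (l : List α) (h : l ≠ []) :
    (∃ a, l = [a]) ∨ ∃ a b t, l = a :: b :: t := by
  rcases l with _ | ⟨a, _ | ⟨b, t⟩⟩
  · exact absurd rfl h
  · exact Or.inl ⟨a, rfl⟩
  · exact Or.inr ⟨a, b, t, rfl⟩

end Aux13

section TW
open Aux13

lemma trekWalkOK {U : Type} {E : U → U → Prop} {A : Set U} {u v : U} (τ : Trek E u v)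
    (hne : u ≠ v) (htop : τ.top ∉ A)
    (hl : ∀ a ∈ τ.left.dropLast, a ∉ A) (hr : ∀ a ∈ τ.right.dropLast, a ∉ A) :
    WalkOK E A (bwd τ.left ++ fwd τ.right) u v := by
  obtain ⟨l, r, lne, rne, teq, cl, cr, ll, lr⟩ := τ
  simp only [Trek.top] at htop
  dsimp only at *
  rcases l with _ | ⟨a, _ | ⟨b, t⟩⟩
  · exact absurd rfl lne
  · rcases r with _ | ⟨c, _ | ⟨d, t'⟩⟩
    · exact absurd rfl rne
    · exfalso
      apply hne
      have h1 : a = u := ll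
      have h2 : c = v := lr
      have h3 : a = c := by simpa using teq
      rw [← h1, h3, h2]
    · have W := fwdOK t' c d cr hr
      have h3 : a = c := by simpa using teq
      have h4 : (c :: d :: t').getLast (by simp) = v := lr
      have h5 : a = u := ll
      have hcu : c = u := h3.symm.trans h5
      have e : bwd [a] ++ fwd (c :: d :: t') = fwd (c :: d :: t') := by
        rw [show bwd [a] = [] from rfl, List.nil_append]
      rw [e]
      exact W.cast hcu h4
  · have Wb := bwdOK t a b cl hl
    have hlast : (a :: b :: t).getLast (by simp) = u := ll
    rw [hlast] at Wb
    rcases r with _ | ⟨c, _ | ⟨d, t'⟩⟩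
    · exact absurd rfl rne
    · have hac : a = c := by simpa using teq
      have hcv : c = v := lr
      have e : bwd (a :: b :: t) ++ fwd [c] = bwd (a :: b :: t) := by
        rw [show fwd [c] = [] from rfl, List.append_nil]
      rw [e, ← hcv, ← hac]
      exact Wb
    · have Wf := fwdOK t' c d cr hr
      have hcv : (c :: d :: t').getLast (by simp) = v := lr
      have hac : a = c := by simpa using teq
      have Wb' := Wb.cast rfl hac
      have Wf' := (Wf.cast rfl hcv)
      refine Wb'.append Wf' ?_
      have hl1 : ((bwd (a :: b :: t)).getLast Wb'.ne).1 = false :=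
        bwd_all_false _ _ (List.getLast_mem _)
      have hl2 : ((bwd (a :: b :: t)).getLast Wb'.ne).2.2 = c := Wb'.last
      refine spo_false_left hl1 ?_
      rw [hl2, ← hac]
      simpa using htop

end TW


theorem stmt13 {U : Type} (E : U → U → Prop) (hE : Acyclic E) (A : Set U)
    {p : ℕ} (hp : 4 ≤ p) (cyc : Fin p ↪ U) (hA : ∀ i, cyc i ∉ A)
    (hdc : ∀ i j : Fin p, i ≠ j →
      ((∃ w : DWalk E (cyc i) (cyc j), w.DConn A) ↔ cycAdj p i j))
    {n : ℕ} (x y : Fin n → U)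
    (hx : Function.Injective x) (hy : Function.Injective y)
    (hxr : Set.range x = insert (cyc ⟨0, by omega⟩) A)
    (hyr : Set.range y = insert (cyc ⟨1, by omega⟩) A)
    (S : TrekSystem E x y) (hNS : S.NoSided)
    (i0 : Fin n) (hx0 : x i0 = (cyc ⟨0, by omega⟩)) :
    {a | a ∈ (S.trek i0).left} ≠ {(cyc ⟨0, by omega⟩)} ∧
    (S.trek i0).top ≠ (cyc ⟨0, by omega⟩) ∧
    Relation.ReflTransGen (fun a b => E a b ∧ a ∉ A) (S.trek i0).top (cyc ⟨0, by omega⟩) ∧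
    (S.trek i0).top ∈ TopsA E A (cyc ⟨0, by omega⟩) (cyc ⟨1, by omega⟩) := by
  classical
  have hp0 : (0:ℕ) < p := by omega
  have hp1 : (1:ℕ) < p := by omega
  have hppm : p - 1 < p := by omega
  set P : U := cyc ⟨0, by omega⟩ with hPdef
  set Q : U := cyc ⟨1, by omega⟩ with hQdef
  have hPA : P ∉ A := hA _
  have hQA : Q ∉ A := hA _
  have hPQ : P ≠ Q := by
    intro h
    have := cyc.injective h
    simp [Fin.ext_iff] at this
  have hyAQ : ∀ j : Fin n, y j = Q ∨ y j ∈ A := by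
    intro j
    have h0 : y j ∈ Set.range y := Set.mem_range_self j
    rw [hyr] at h0
    exact h0
  have hAx : ∀ a ∈ A, ∃ k, x k = a := by
    intro a ha
    have h0 : a ∈ Set.range x := by rw [hxr]; exact Set.mem_insert_of_mem _ ha
    exact h0
  have hAy : ∀ a ∈ A, ∃ k, y k = a := by
    intro a ha
    have h0 : a ∈ Set.range y := by rw [hyr]; exact Set.mem_insert_of_mem _ ha
    exact h0
  have T2 : ∀ j : Fin n, ∀ a ∈ (S.trek j).left, a ∈ A → a = x j := by
    intro j a ha haA
    obtain ⟨k, hk⟩ := hAx a haA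
    by_cases hkj : k = j
    · exact (hkj ▸ hk).symm
    · exfalso
      have hmem : a ∈ (S.trek k).left := hk ▸ Aux13.mem_of_getLast_eq (S.trek k).last_left
      exact (hNS j k (fun hh => hkj hh.symm)).1 a ⟨ha, hmem⟩
  have T3 : ∀ j : Fin n, ∀ a ∈ (S.trek j).right, a ∈ A → a = y (S.perm j) := by
    intro j a ha haA
    obtain ⟨m, hm⟩ := hAy a haA
    by_cases hkj : S.perm.symm m = j
    · have e1 : y (S.perm j) = a := by rw [← hkj, Equiv.apply_symm_apply, hm]
      exact e1.symm
    · exfalso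
      have hmem0 : y (S.perm (S.perm.symm m)) ∈ (S.trek (S.perm.symm m)).right :=
        Aux13.mem_of_getLast_eq (S.trek (S.perm.symm m)).last_right
      have e2 : y (S.perm (S.perm.symm m)) = a := by rw [Equiv.apply_symm_apply, hm]
      have hmem : a ∈ (S.trek (S.perm.symm m)).right := Aux13.mem_cast hmem0 e2
      exact (hNS j _ (fun hh => hkj hh.symm)).2 a ⟨ha, hmem⟩
  have T4l : ∀ j : Fin n, ∀ a ∈ (S.trek j).left.dropLast, a ∉ A := by
    intro j a ha haA
    have h1 := T2 j a (List.dropLast_subset _ ha) haA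
    have h2 := (S.trek j).last_left
    have h3 := Aux13.getLast_not_mem_dropLast (S.trek j).left_ne
      (Aux13.chain'_nodup hE (S.trek j).chain_left)
    rw [h2] at h3
    rw [h1] at ha
    exact h3 ha
  have T4r : ∀ j : Fin n, ∀ a ∈ (S.trek j).right.dropLast, a ∉ A := by
    intro j a ha haA
    have h1 := T3 j a (List.dropLast_subset _ ha) haA
    have h2 := (S.trek j).last_right
    have h3 := Aux13.getLast_not_mem_dropLast (S.trek j).right_ne
      (Aux13.chain'_nodup hE (S.trek j).chain_right)
    rw [h2] at h3
    rw [h1] at ha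
    exact h3 ha
  have topmem_l : ∀ j : Fin n, (S.trek j).top ∈ (S.trek j).left := fun j => List.head_mem _
  have topmem_r : ∀ j : Fin n, (S.trek j).top ∈ (S.trek j).right := by
    intro j
    rw [Trek.top, (S.trek j).top_eq]
    exact List.head_mem _
  have topA : ∀ j : Fin n, (S.trek j).top ∈ A → x j = y (S.perm j) := by
    intro j hj
    exact (T2 j _ (topmem_l j) hj).symm.trans (T3 j _ (topmem_r j) hj)
  have top_single_l : ∀ j : Fin n, ∀ a, (S.trek j).left = [a] → (S.trek j).top = x j := by
    intro j a hja
    have h1 := topmem_l j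
    have h2 : x j ∈ (S.trek j).left := Aux13.mem_of_getLast_eq (S.trek j).last_left
    rw [hja] at h1 h2
    exact (Aux13.eq_of_mem_singleton' h1).trans (Aux13.eq_of_mem_singleton' h2).symm
  have top_single_r : ∀ j : Fin n, ∀ a, (S.trek j).right = [a] → (S.trek j).top = y (S.perm j) := by
    intro j a hja
    have h1 := topmem_r j
    have h2 : y (S.perm j) ∈ (S.trek j).right := Aux13.mem_of_getLast_eq (S.trek j).last_right
    rw [hja] at h1 h2
    exact (Aux13.eq_of_mem_singleton' h1).trans (Aux13.eq_of_mem_singleton' h2).symm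
  -- the successor function along the trek system
  have hgex : ∀ j : Fin n, ∃ k, y (S.perm j) ≠ Q → x k = y (S.perm j) := by
    intro j
    by_cases hq : y (S.perm j) = Q
    · exact ⟨j, fun hh => absurd hq hh⟩
    · rcases hyAQ (S.perm j) with h0 | h0
      · exact absurd h0 hq
      · obtain ⟨k, hk⟩ := hAx _ h0
        exact ⟨k, fun _ => hk⟩
  choose g hgs using hgex
  set h : ℕ → Fin n := fun m => g^[m] i0 with hhdef
  have hh0 : h 0 = i0 := rfl
  have hhsucc : ∀ m, h (m + 1) = g (h m) := fun m => Function.iterate_succ_apply' g m i0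
  have hreach : ∃ m, y (S.perm (h m)) = Q := by
    by_contra hcon
    push_neg at hcon
    have hxA : ∀ m, x (h (m + 1)) ∈ A := by
      intro m
      rw [hhsucc, hgs _ (hcon m)]
      rcases hyAQ (S.perm (h m)) with h0 | h0
      · exact absurd h0 (hcon m)
      · exact h0
    have hback : ∀ a b : ℕ, h (a + 1) = h (b + 1) → h a = h b := by
      intro a b hab
      rw [hhsucc, hhsucc] at hab
      have h1 : y (S.perm (h a)) = y (S.perm (h b)) := by
        rw [← hgs _ (hcon a), ← hgs _ (hcon b), hab]
      exact S.perm.injective (hy h1)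
    have key : ∀ a b : ℕ, a < b → h a = h b → False := by
      intro a
      induction a with
      | zero =>
        intro b hb hab
        rcases b with _ | b'
        · omega
        · have := hxA b'
          rw [← hab, hh0, hx0] at this
          exact hPA this
      | succ a' IH =>
        intro b hb hab
        rcases b with _ | b'
        · omega
        · exact IH b' (by omega) (hback a' b' hab)
    obtain ⟨a, b, hne, heq⟩ := Finite.exists_ne_map_eq_of_infinite h
    rcases Nat.lt_or_ge a b with hlt | hge
    · exact key a b hlt heq
    · exact key b a (by omega) heq.symm
  set M : ℕ := Nat.find hreach with hMdef
  have hM : y (S.perm (h M)) = Q := Nat.find_spec hreach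
  have hMmin : ∀ k, k < M → y (S.perm (h k)) ≠ Q := fun k hk => Nat.find_min hreach hk
  have hstep : ∀ k, k < M → x (h (k + 1)) = y (S.perm (h k)) := by
    intro k hk
    rw [hhsucc]
    exact hgs _ (hMmin k hk)
  have hstepA : ∀ k, k < M → x (h (k + 1)) ∈ A := by
    intro k hk
    rw [hstep k hk]
    rcases hyAQ (S.perm (h k)) with h0 | h0
    · exact absurd h0 (hMmin k hk)
    · exact h0
  have hconst : ∀ k, h (k + 1) = h k → ∀ d, h (k + d) = h k := by
    intro k hk d
    induction d with
    | zero => rfl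
    | succ d ih =>
      have : h (k + (d + 1)) = g (h (k + d)) := by
        rw [show k + (d + 1) = (k + d) + 1 from rfl, hhsucc]
      rw [this, ih, ← hhsucc, hk]
  have hnt : ∀ k, k ≤ M → x (h k) ≠ y (S.perm (h k)) := by
    intro k hk hbad
    rcases Nat.lt_or_ge k M with hlt | hge
    · have h1 : h (k + 1) = h k := hx (by rw [hstep k hlt, ← hbad])
      have h2 : h M = h k := by
        have := hconst k h1 (M - k)
        rwa [show k + (M - k) = M by omega] at this
      rw [h2] at hM
      exact hMmin k hlt hM
    · have hkM : k = M := by omega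
      subst hkM
      rw [hM] at hbad
      rcases Nat.eq_zero_or_pos M with h0 | h0
      · rw [h0, hh0, hx0] at hbad
        exact hPQ hbad
      · have := hstepA (M - 1) (by omega)
        rw [show M - 1 + 1 = M by omega] at this
        rw [hbad] at this
        exact hQA this
  have htopA : ∀ k, k ≤ M → (S.trek (h k)).top ∉ A := by
    intro k hk hin
    exact hnt k hk (topA _ hin)
  have TW : ∀ k, k ≤ M →
      Aux13.WalkOK E A (Aux13.bwd (S.trek (h k)).left ++ Aux13.fwd (S.trek (h k)).right)
        (x (h k)) (y (S.perm (h k))) :=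
    fun k hk => trekWalkOK _ (hnt k hk) (htopA k hk) (T4l _) (T4r _)
  have hleft2 : ∀ k, 1 ≤ k → k ≤ M → ∃ a b t, (S.trek (h k)).left = a :: b :: t := by
    intro k hk1 hkM
    rcases Aux13.list_shape _ (S.trek (h k)).left_ne with ⟨a, ha⟩ | hs
    · exfalso
      have h1 := top_single_l _ a ha
      have h2 : x (h k) ∈ A := by
        have := hstepA (k - 1) (by omega)
        rwa [show k - 1 + 1 = k by omega] at this
      rw [← h1] at h2
      exact htopA k hkM h2
    · exact hs
  have hright2 : ∀ k, k < M → ∃ a b t, (S.trek (h k)).right = a :: b :: t := by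
    intro k hkM
    rcases Aux13.list_shape _ (S.trek (h k)).right_ne with ⟨a, ha⟩ | hs
    · exfalso
      have h1 := top_single_r _ a ha
      have h2 : y (S.perm (h k)) ∈ A := by
        have := hstepA k hkM
        rwa [hstep k hkM] at this
      rw [← h1] at h2
      exact htopA k (by omega) h2
    · exact hs
  -- head of a trek walk with non-singleton left side is a false step
  have headfalse : ∀ k (hab : ∃ a b t, (S.trek (h k)).left = a :: b :: t)
      (hne : (Aux13.bwd (S.trek (h k)).left ++ Aux13.fwd (S.trek (h k)).right) ≠ []),
      ((Aux13.bwd (S.trek (h k)).left ++ Aux13.fwd (S.trek (h k)).right).head hne).1 = false := by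
    intro k hab hne
    obtain ⟨a, b, t, he⟩ := hab
    have hbne : Aux13.bwd (S.trek (h k)).left ≠ [] := by rw [he]; exact Aux13.bwd_ne
    rw [Aux13.head_append_left hbne]
    exact Aux13.bwd_all_false _ _ (List.head_mem hbne)
  -- last step of a trek walk with non-singleton right side is a true step
  have lasttrue : ∀ k (hab : ∃ a b t, (S.trek (h k)).right = a :: b :: t)
      (hne : (Aux13.bwd (S.trek (h k)).left ++ Aux13.fwd (S.trek (h k)).right) ≠ []),
      ((Aux13.bwd (S.trek (h k)).left ++ Aux13.fwd (S.trek (h k)).right).getLast hne).1 = true := by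
    intro k hab hne
    obtain ⟨a, b, t, he⟩ := hab
    have hfne : Aux13.fwd (S.trek (h k)).right ≠ [] := by rw [he]; exact Aux13.fwd_ne
    rw [Aux13.getLast_append_right hfne]
    exact Aux13.fwd_all_true _ _ (List.getLast_mem hfne)
  -- build the chain of trek walks
  have build : ∀ d k, k + d = M → 1 ≤ k →
      ∃ L, ∃ W : Aux13.WalkOK E A L (x (h k)) Q, (L.head W.ne).1 = false := by
    intro d
    induction d with
    | zero =>
      intro k hkM hk1
      have hkM' : k = M := by omega
      refine ⟨_, (TW k (by omega)).cast rfl (by rw [hkM']; exact hM), ?_⟩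
      exact headfalse k (hleft2 k hk1 (by omega)) _
    | succ d IH =>
      intro k hkM hk1
      obtain ⟨L', W', hW'⟩ := IH (k + 1) (by omega) (by omega)
      have T := (TW k (by omega)).cast rfl (hstep k (by omega)).symm
      have hjunc : stepPairOK A
          ((Aux13.bwd (S.trek (h k)).left ++ Aux13.fwd (S.trek (h k)).right).getLast T.ne)
          (L'.head W'.ne) := by
        refine Aux13.spo_collider (lasttrue k (hright2 k (by omega)) _) hW' ?_
        rw [T.last]
        exact hstepA k (by omega)
      refine ⟨_, T.append W' hjunc, ?_⟩
      rw [Aux13.head_append_left T.ne]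
      exact headfalse k (hleft2 k hk1 (by omega)) _
  -- the full walk from P to Q
  obtain ⟨LL, WL, hLL⟩ :
      ∃ LL, ∃ _ : Aux13.WalkOK E A LL P Q,
        LL = Aux13.bwd (S.trek i0).left ++ Aux13.fwd (S.trek i0).right ∨
        ∃ L1 c d t', LL = (Aux13.bwd (S.trek i0).left ++ Aux13.fwd (S.trek i0).right) ++ L1 ∧
          (S.trek i0).right = c :: d :: t' := by
    rcases Nat.eq_zero_or_pos M with hM0 | hM0
    · have hMQ : y (S.perm (h 0)) = Q := by rw [show (0:ℕ) = M from hM0.symm]; exact hM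
      exact ⟨_, (TW 0 (by omega)).cast hx0 hMQ, Or.inl rfl⟩
    · obtain ⟨L1, W1, h1⟩ := build (M - 1) 1 (by omega) le_rfl
      have T := (TW 0 (by omega)).cast hx0 (hstep 0 hM0).symm
      have hjunc : stepPairOK A
          ((Aux13.bwd (S.trek (h 0)).left ++ Aux13.fwd (S.trek (h 0)).right).getLast T.ne)
          (L1.head W1.ne) := by
        refine Aux13.spo_collider (lasttrue 0 (hright2 0 hM0) _) h1 ?_
        rw [T.last]
        exact hstepA 0 hM0
      obtain ⟨c, d, t', hr0⟩ := hright2 0 hM0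
      exact ⟨_, T.append W1 hjunc, Or.inr ⟨L1, c, d, t', rfl, hr0⟩⟩
  -- claim 2 : the top is not P
  have claim2 : (S.trek i0).top ≠ P := by
    intro htop
    -- the left side is a singleton
    have hnd := Aux13.chain'_nodup hE (S.trek i0).chain_left
    have e1 : (S.trek i0).left.getLast (S.trek i0).left_ne = P :=
      (S.trek i0).last_left.trans hx0
    have hhe : (S.trek i0).left.head (S.trek i0).left_ne
        = (S.trek i0).left.getLast (S.trek i0).left_ne := htop.trans e1.symm
    have hsingle := Aux13.nodup_head_getLast (S.trek i0).left_ne hnd hhe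
    -- the right side is not a singleton
    have hrne : ∃ c d t', (S.trek i0).right = c :: d :: t' := by
      rcases Aux13.list_shape _ (S.trek i0).right_ne with ⟨c, hc⟩ | hs
      · exfalso
        have h1 := (top_single_r i0 c hc).symm.trans htop
        rcases hyAQ (S.perm i0) with h0 | h0
        · rw [h1] at h0; exact hPQ h0
        · rw [h1] at h0; exact hPA h0
      · exact hs
    obtain ⟨c, d, t', hr0⟩ := hrne
    -- bwd of the left side is empty
    have hb : Aux13.bwd (S.trek i0).left = [] := by rw [hsingle]; rfl
    have hfne : Aux13.fwd (S.trek i0).right ≠ [] := by rw [hr0]; exact Aux13.fwd_ne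
    have hL0 : Aux13.bwd (S.trek i0).left ++ Aux13.fwd (S.trek i0).right
        = Aux13.fwd (S.trek i0).right := by rw [hb, List.nil_append]
    have hfhead : ∀ hne, ((Aux13.fwd (S.trek i0).right).head hne).1 = true :=
      fun hne => Aux13.fwd_all_true _ _ (List.head_mem hne)
    have hheadtrue : ∀ hne : LL ≠ [], (LL.head hne).1 = true := by
      rcases hLL with he | ⟨L1, c1, d1, t1, he, -⟩ <;> subst he <;> intro hne
      · rw [Aux13.head_append_nil_left hb hne hfne]
        exact hfhead _
      · have hL0ne : Aux13.bwd (S.trek i0).left ++ Aux13.fwd (S.trek i0).right ≠ [] := by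
          rw [hL0]; exact hfne
        rw [Aux13.head_append_left hL0ne]
        rw [Aux13.head_append_nil_left hb hL0ne hfne]
        exact hfhead _
    -- reverse the walk and extend it to cyc (p-1)
    have Wrev := WL.reverse
    have hmapne : LL.map Aux13.flipS ≠ [] := by simp [WL.ne]
    have hlastrev : ((LL.map Aux13.flipS).reverse).getLast Wrev.ne
        = Aux13.flipS (LL.head WL.ne) := by
      rw [List.getLast_reverse, List.head_map]
    have hne0p : (⟨0, hp0⟩ : Fin p) ≠ ⟨p - 1, hppm⟩ := by
      simp only [ne_eq, Fin.mk.injEq]; omega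
    have hadj : cycAdj p ⟨0, hp0⟩ ⟨p - 1, hppm⟩ := by
      right
      show (p - 1 + 1) % p = 0
      rw [show p - 1 + 1 = p by omega, Nat.mod_self]
    obtain ⟨u, hu⟩ := (hdc _ _ hne0p).2 hadj
    have Wu : Aux13.WalkOK E A u.steps P (cyc ⟨p - 1, hppm⟩) := Aux13.walkOK_of_dwalk u hu
    have hjunc : stepPairOK A (((LL.map Aux13.flipS).reverse).getLast Wrev.ne)
        (u.steps.head Wu.ne) := by
      refine Aux13.spo_false_left ?_ ?_
      · rw [hlastrev]
        simp only [Aux13.flipS, hheadtrue WL.ne]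
        rfl
      · rw [hlastrev]
        show (LL.head WL.ne).2.1 ∉ A
        rw [WL.first]
        exact hPA
    have Wbad := Wrev.append Wu hjunc
    obtain ⟨w2, hw2, -⟩ := Wbad.toDWalk
    have hne1p : (⟨1, hp1⟩ : Fin p) ≠ ⟨p - 1, hppm⟩ := by
      simp only [ne_eq, Fin.mk.injEq]; omega
    have hcyc := (hdc ⟨1, hp1⟩ ⟨p - 1, hppm⟩ hne1p).1 ⟨w2, hw2⟩
    rcases hcyc with hc | hc
    · have e2 : (1 + 1) % p = 2 := Nat.mod_eq_of_lt (by omega)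
      simp only [e2] at hc
      omega
    · have e2 : (p - 1 + 1) % p = 0 := by
        rw [show p - 1 + 1 = p by omega, Nat.mod_self]
      simp only [e2] at hc
      omega
  -- claim 1
  have claim1 : {a | a ∈ (S.trek i0).left} ≠ {P} := by
    intro hset
    apply claim2
    have hmem : (S.trek i0).top ∈ {a | a ∈ (S.trek i0).left} := topmem_l i0
    rw [hset] at hmem
    exact hmem
  -- claim 3
  have hl0A : ∀ a ∈ (S.trek i0).left, a ∉ A := by
    intro a ha haA
    have h1 := T2 i0 a ha haA
    rw [hx0] at h1
    rw [h1] at haA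
    exact hPA haA
  have claim3 : Relation.ReflTransGen (fun a b => E a b ∧ a ∉ A) (S.trek i0).top P := by
    have hc := Aux13.chain'_restrict (S.trek i0).chain_left hl0A
    have hr := Aux13.chain'_rtg (S.trek i0).left_ne hc
    have e1 : (S.trek i0).left.getLast (S.trek i0).left_ne = P :=
      (S.trek i0).last_left.trans hx0
    rw [e1] at hr
    exact hr
  -- claim 4
  have claim4 : (S.trek i0).top ∈ TopsA E A P Q := by
    obtain ⟨a0, b0, t0, hl0⟩ : ∃ a b t, (S.trek i0).left = a :: b :: t := by
      rcases Aux13.list_shape _ (S.trek i0).left_ne with ⟨a, ha⟩ | hs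
      · exact absurd ((top_single_l i0 a ha).trans hx0) claim2
      · exact hs
    have htopa0 : a0 = (S.trek i0).top := (Aux13.head_eq_of_eq (h := (S.trek i0).left_ne) hl0).symm
    have htopOf : topOf LL P = (S.trek i0).top := by
      rcases hLL with he | ⟨L1, c1, d1, t1, he, hr0⟩
      · rw [he, hl0, Aux13.topOf_bwd_append]
        rcases Aux13.list_shape _ (S.trek i0).right_ne with ⟨c, hc⟩ | ⟨c, d, t', hc⟩
        · rw [hc]
          rw [show Aux13.fwd [c] = [] from rfl]
          exact htopa0
        · rw [hc, show Aux13.fwd (c :: d :: t') = (true, c, d) :: Aux13.fwd (d :: t') from rfl,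
            Aux13.topOf_true_cons]
          have := (S.trek i0).top_eq
          exact (Aux13.head_eq_of_eq (h := (S.trek i0).right_ne) hc).symm.trans
            ((S.trek i0).top_eq.symm)
      · rw [he, List.append_assoc, hl0, Aux13.topOf_bwd_append]
        rw [hr0, show Aux13.fwd (c1 :: d1 :: t1) = (true, c1, d1) :: Aux13.fwd (d1 :: t1) from rfl]
        rw [List.cons_append, Aux13.topOf_true_cons]
        exact (Aux13.head_eq_of_eq (h := (S.trek i0).right_ne) hr0).symm.trans
          ((S.trek i0).top_eq.symm)
    obtain ⟨w, hw, hsteps⟩ := WL.toDWalk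
    refine ⟨w, hw, ?_⟩
    have : w.top = topOf LL P := by rw [DWalk.top, hsteps]
    exact this.trans htopOf
  exact ⟨claim1, claim2, claim3, claim4⟩
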